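/- Let (x_i, f_i) be a Schauder frame of a Banach space X such that for every x** ∈ X**, sup{ |x**(f)| : f ∈ span(f_i : i ≥ n), ‖f‖ ≤ 1 } → 0 as n → ∞. Then the frame is pre-boundedly complete. -/
import Mathlib


open Filter Topology

/-- `sup { |F g| : g ∈ span (f i : i ≥ n), ‖g‖ ≤ 1 }`, for `F ∈ X**`. -/
noncomputable def tailSupBidual {X : Type*} [NormedAddCommGroup X] [NormedSpace ℝ X]
    (f : ℕ → X →L[ℝ] ℝ) (F : (X →L[ℝ] ℝ) →L[ℝ] ℝ) (n : ℕ) : ℝ :=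
  sSup ((fun g : X →L[ℝ] ℝ => |F g|) ''
    {g | g ∈ Submodule.span ℝ (f '' {i | n ≤ i}) ∧ ‖g‖ ≤ 1})

/-- If `(x i, f i)` is a Schauder frame of a Banach space `X` such that
for every `x** ∈ X**` one has `‖x**|span(f i : i ≥ n)‖ → 0`, then the frame is
pre-boundedly complete: for every `x** ∈ X**`, the series `∑ x**(f i) • x i` converges
in norm in `X`. -/
theorem schauderFrame_preBoundedlyComplete
    {X : Type*} [NormedAddCommGroup X] [NormedSpace ℝ X] [CompleteSpace X]
    (x : ℕ → X) (f : ℕ → X →L[ℝ] ℝ)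
    (hx : ∀ i, x i ≠ 0) (hf : ∀ i, f i ≠ 0)
    (hframe : ∀ v : X,
      Tendsto (fun n => ∑ i ∈ Finset.range n, f i v • x i) atTop (𝓝 v))
    (htail : ∀ F : (X →L[ℝ] ℝ) →L[ℝ] ℝ, Tendsto (tailSupBidual f F) atTop (𝓝 0)) :
    ∀ F : (X →L[ℝ] ℝ) →L[ℝ] ℝ, ∃ v : X,
      Tendsto (fun n => ∑ i ∈ Finset.range n, F (f i) • x i) atTop (𝓝 v) := by
  clear hx hf
  -- the partial sum operators
  set T : ℕ → X →L[ℝ] X := fun n => ∑ i ∈ Finset.range n, (f i).smulRight (x i) with hT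
  have hTapp : ∀ n v, T n v = ∑ i ∈ Finset.range n, f i v • x i := by
    intro n v
    simp [hT, ContinuousLinearMap.sum_apply]
  -- uniform boundedness
  have hptbdd : ∀ v : X, ∃ C, ∀ n, ‖T n v‖ ≤ C := by
    intro v
    have hb : Bornology.IsBounded (Set.range fun n => T n v) := by
      have : CauchySeq fun n => T n v := by
        have := (hframe v).cauchySeq
        simpa [hTapp] using this
      exact this.isBounded_range
    rcases hb.exists_norm_le with ⟨C, hC⟩
    exact ⟨C, fun n => hC _ ⟨n, rfl⟩⟩
  rcases banach_steinhaus hptbdd with ⟨C0, hC0⟩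
  set C : ℝ := max C0 0 with hCdef
  have hCnn : 0 ≤ C := le_max_right _ _
  have hTC : ∀ n, ‖T n‖ ≤ C := fun n => (hC0 n).trans (le_max_left _ _)
  intro F
  -- basic facts about tailSupBidual
  have hbdd : ∀ m, BddAbove ((fun g : X →L[ℝ] ℝ => |F g|) ''
      {g | g ∈ Submodule.span ℝ (f '' {i | m ≤ i}) ∧ ‖g‖ ≤ 1}) := by
    intro m
    refine ⟨‖F‖, ?_⟩
    rintro _ ⟨g, ⟨hg, hg1⟩, rfl⟩
    have h1 : |F g| ≤ ‖F‖ * ‖g‖ := by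
      have := F.le_opNorm g
      simpa [Real.norm_eq_abs] using this
    nlinarith [norm_nonneg F]
  have hnonneg : ∀ m, 0 ≤ tailSupBidual f F m := by
    intro m
    apply le_csSup (hbdd m)
    exact ⟨0, ⟨Submodule.zero_mem _, by simp⟩, by simp⟩
  have key : ∀ m (h : X →L[ℝ] ℝ), h ∈ Submodule.span ℝ (f '' {i | m ≤ i}) →
      |F h| ≤ tailSupBidual f F m * ‖h‖ := by
    intro m h hmem
    rcases eq_or_ne h 0 with rfl | hne
    · simp
    · have hpos : (0:ℝ) < ‖h‖ := norm_pos_iff.2 hne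
      set g : X →L[ℝ] ℝ := ‖h‖⁻¹ • h with hgdef
      have hgmem : g ∈ Submodule.span ℝ (f '' {i | m ≤ i}) :=
        Submodule.smul_mem _ _ hmem
      have hgnorm : ‖g‖ ≤ 1 := by
        have h1 : ‖g‖ ≤ ‖(‖h‖⁻¹ : ℝ)‖ * ‖h‖ := ContinuousLinearMap.opNorm_smul_le _ _
        have h2 : ‖(‖h‖⁻¹ : ℝ)‖ * ‖h‖ = 1 := by
          rw [Real.norm_eq_abs, abs_inv, abs_norm, inv_mul_cancel₀ hpos.ne']
        rw [h2] at h1; exact h1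
      have hFg : |F g| ≤ tailSupBidual f F m :=
        le_csSup (hbdd m) ⟨g, ⟨hgmem, hgnorm⟩, rfl⟩
      have hh : h = ‖h‖ • g := by
        rw [hgdef, smul_smul, mul_inv_cancel₀ hpos.ne', one_smul]
      have hFh : F h = ‖h‖ * F g := by
        conv_lhs => rw [hh]
        rw [map_smul, smul_eq_mul]
      calc |F h| = ‖h‖ * |F g| := by
            rw [hFh, abs_mul, abs_of_pos hpos]
        _ ≤ ‖h‖ * tailSupBidual f F m := by
            exact mul_le_mul_of_nonneg_left hFg hpos.le
        _ = tailSupBidual f F m * ‖h‖ := mul_comm _ _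
  -- the sequence of partial sums
  set a : ℕ → X := fun n => ∑ i ∈ Finset.range n, F (f i) • x i with ha
  -- the main estimate
  have est : ∀ m n, m ≤ n → ‖a n - a m‖ ≤ tailSupBidual f F m * (2 * C) := by
    intro m n hmn
    have hMnn : 0 ≤ tailSupBidual f F m * (2 * C) :=
      mul_nonneg (hnonneg m) (by positivity)
    apply NormedSpace.norm_le_dual_bound ℝ (a n - a m) hMnn
    intro g
    -- the functional h_g
    set hg : X →L[ℝ] ℝ := ∑ i ∈ Finset.Ico m n, g (x i) • f i with hhg
    have hgmem : hg ∈ Submodule.span ℝ (f '' {i | m ≤ i}) := by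
      apply Submodule.sum_mem
      intro i hi
      apply Submodule.smul_mem
      exact Submodule.subset_span ⟨i, (Finset.mem_Ico.1 hi).1, rfl⟩
    have hgnorm : ‖hg‖ ≤ 2 * C * ‖g‖ := by
      apply ContinuousLinearMap.opNorm_le_bound _ (by positivity)
      intro v
      have h1 : hg v = g (T n v - T m v) := by
        rw [hTapp, hTapp, ← Finset.sum_Ico_eq_sub _ hmn, map_sum]
        simp [hhg, ContinuousLinearMap.sum_apply, mul_comm]
      rw [h1]
      calc ‖g (T n v - T m v)‖ ≤ ‖g‖ * ‖T n v - T m v‖ := g.le_opNorm _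
        _ ≤ ‖g‖ * (‖T n v‖ + ‖T m v‖) :=
            mul_le_mul_of_nonneg_left (norm_sub_le _ _) (norm_nonneg g)
        _ ≤ ‖g‖ * (C * ‖v‖ + C * ‖v‖) := by
            have h2 := (T n).le_of_opNorm_le (hTC n) v
            have h3 := (T m).le_of_opNorm_le (hTC m) v
            exact mul_le_mul_of_nonneg_left (add_le_add h2 h3) (norm_nonneg g)
        _ = 2 * C * ‖g‖ * ‖v‖ := by ring
    have heq : g (a n - a m) = F hg := by
      rw [ha, ← Finset.sum_Ico_eq_sub _ hmn, map_sum, hhg, map_sum]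
      simp [mul_comm]
    calc ‖g (a n - a m)‖ = |F hg| := by rw [heq, Real.norm_eq_abs]
      _ ≤ tailSupBidual f F m * ‖hg‖ := key m hg hgmem
      _ ≤ tailSupBidual f F m * (2 * C * ‖g‖) :=
          mul_le_mul_of_nonneg_left hgnorm (hnonneg m)
      _ = tailSupBidual f F m * (2 * C) * ‖g‖ := by ring
  -- Cauchy and conclude
  have hcauchy : CauchySeq a := by
    rw [Metric.cauchySeq_iff']
    intro ε hε
    have hεpos : 0 < ε / (2 * C + 1) := by positivity
    rcases (Metric.tendsto_atTop.1 (htail F)) _ hεpos with ⟨N, hN⟩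
    refine ⟨N, fun n hn => ?_⟩
    have h1 := est N n hn
    have h2 : tailSupBidual f F N < ε / (2 * C + 1) := by
      have := hN N le_rfl
      rwa [Real.dist_eq, sub_zero, abs_of_nonneg (hnonneg N)] at this
    have h3 : tailSupBidual f F N * (2 * C) < ε := by
      calc tailSupBidual f F N * (2 * C) ≤ tailSupBidual f F N * (2 * C + 1) := by
            nlinarith [hnonneg N]
        _ < ε / (2 * C + 1) * (2 * C + 1) := by
            apply mul_lt_mul_of_pos_right h2; positivity
        _ = ε := by field_simp
    rw [dist_eq_norm]
    exact lt_of_le_of_lt h1 h3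
  exact cauchySeq_tendsto_of_complete hcauchy
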